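/- Let K be a compact Hausdorff space and A ⊆ C(K;ℝ) a vector sublattice containing constants and separating points of K. Then A = F(K) if and only if for every p ∈ K, every element of A is locally constant at p. -/

import Mathlib

open Set

/-- A fiber of a finite-range continuous function is open. -/
lemma fiber_isOpen {K : Type*} [TopologicalSpace K] (f : C(K, ℝ))
    (hf : (Set.range f).Finite) (c : ℝ) : IsOpen (f ⁻¹' {c}) := by
  have : f ⁻¹' {c} = (f ⁻¹' (Set.range f \ {c}))ᶜ := by
    ext x
    simp only [mem_preimage, mem_singleton_iff, mem_compl_iff, mem_diff, not_and, not_not]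
    constructor
    · intro h _; exact h
    · intro h; exact h ⟨x, rfl⟩
  rw [this]
  exact ((hf.diff : (Set.range f \ {c}).Finite).isClosed.preimage f.continuous).isOpen_compl

/-- The indicator of a clopen set, as a continuous map. -/
noncomputable def clopenIndicator {K : Type*} [TopologicalSpace K] (S : Set K)
    (hS : IsClopen S) : C(K, ℝ) where
  toFun := S.indicator 1
  continuous_toFun := continuous_indicator (by simp [hS]) <| continuous_const.continuousOn

theorem stmt_13 {K : Type*} [TopologicalSpace K] [CompactSpace K] [T2Space K]
    (A : Set C(K, ℝ))
    (hadd : ∀ f ∈ A, ∀ g ∈ A, f + g ∈ A)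
    (hsmul : ∀ (c : ℝ), ∀ f ∈ A, c • f ∈ A)
    (hsup : ∀ f ∈ A, ∀ g ∈ A, f ⊔ g ∈ A)
    (hinf : ∀ f ∈ A, ∀ g ∈ A, f ⊓ g ∈ A)
    (hconst : ∀ c : ℝ, ContinuousMap.const K c ∈ A)
    (hsep : ∀ x y : K, x ≠ y → ∃ f ∈ A, f x ≠ f y) :
    A = {f : C(K, ℝ) | (Set.range f).Finite} ↔
      ∀ p : K, ∀ a ∈ A, ∃ U ∈ nhds p, ∀ x ∈ U, a x = a p := by
  constructor
  · -- forward: finite range functions are locally constant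
    intro hA p a ha
    rw [hA] at ha
    refine ⟨a ⁻¹' {a p}, (fiber_isOpen a ha (a p)).mem_nhds rfl, fun x hx => hx⟩
  · intro hloc
    -- affine members of A
    have haff : ∀ (c d : ℝ), ∀ f ∈ A, c • f + ContinuousMap.const K d ∈ A := fun c d f hf =>
      hadd _ (hsmul c f hf) _ (hconst d)
    -- A separates points strongly
    have hseps : (A : Set C(K, ℝ)).SeparatesPointsStrongly := by
      intro v x y
      by_cases hxy : x = y
      · subst hxy
        exact ⟨ContinuousMap.const K (v x), hconst _, rfl, rfl⟩
      · obtain ⟨f, hf, hne⟩ := hsep x y hxy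
        have hne' : f x - f y ≠ 0 := sub_ne_zero_of_ne hne
        set c : ℝ := (v x - v y) / (f x - f y) with hc
        refine ⟨c • f + ContinuousMap.const K (v x - c * f x), haff c _ f hf, ?_, ?_⟩
        · simp
        · simp only [ContinuousMap.add_apply, ContinuousMap.smul_apply, smul_eq_mul,
            ContinuousMap.const_apply]
          rw [hc]
          field_simp [hc]
          ring
    -- A is dense
    have hdense : closure A = ⊤ :=
      ContinuousMap.sublattice_closure_eq_top A ⟨_, hconst 0⟩ hinf hsup hseps
    -- indicator of any clopen set belongs to A
    have hind : ∀ (S : Set K) (hS : IsClopen S), clopenIndicator S hS ∈ A := by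
      intro S hS
      set χ : C(K, ℝ) := clopenIndicator S hS with hχ
      have hmem : χ ∈ closure A := by rw [hdense]; trivial
      obtain ⟨g, hg, hdist⟩ := Metric.mem_closure_iff.mp hmem (1/3) (by norm_num)
      refine Set.mem_of_eq_of_mem ?_ (hinf _ (hsup _ (haff 3 (-1) g hg) _ (hconst 0)) _ (hconst 1))
      ext x
      have hx : dist (χ x) (g x) < 1/3 :=
        lt_of_le_of_lt (ContinuousMap.dist_apply_le_dist x) hdist
      simp only [ContinuousMap.inf_apply, ContinuousMap.sup_apply, ContinuousMap.add_apply,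
        ContinuousMap.smul_apply, ContinuousMap.const_apply, smul_eq_mul]
      by_cases hxS : x ∈ S
      · have hχx : χ x = 1 := by simp [hχ, clopenIndicator, Set.indicator_of_mem hxS]
        rw [hχx] at hx
        rw [Real.dist_eq] at hx
        have : g x > 2/3 := by cases abs_lt.mp hx with | intro h1 h2 => linarith
        have h1 : (3 : ℝ) * g x + (-1) ≥ 1 := by linarith
        rw [hχx]
        rw [max_eq_left (by linarith), min_eq_right (by linarith)]
      · have hχx : χ x = 0 := by simp [hχ, clopenIndicator, Set.indicator_of_notMem hxS]
        rw [hχx] at hx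
        rw [Real.dist_eq] at hx
        have : g x < 1/3 := by cases abs_lt.mp hx with | intro h1 h2 => linarith
        have h1 : (3 : ℝ) * g x + (-1) ≤ 0 := by linarith
        rw [hχx]
        rw [max_eq_right h1, min_eq_left (by norm_num)]
    ext f
    simp only [Set.mem_setOf_eq]
    constructor
    · -- A ⊆ finite range, via compactness
      intro hf
      choose U hU hUc using fun p => hloc p f hf
      obtain ⟨t, ht⟩ := isCompact_univ.elim_nhds_subcover U (fun p _ => hU p)
      have : Set.range f ⊆ f '' (t : Set K) := by
        rintro _ ⟨x, rfl⟩
        have hx : x ∈ ⋃ p ∈ t, U p := ht.2 (Set.mem_univ x)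
        simp only [Set.mem_iUnion] at hx
        obtain ⟨p, hp, hxp⟩ := hx
        exact ⟨p, hp, (hUc p x hxp).symm⟩
      exact (t.finite_toSet.image f).subset this
    · -- finite range implies f ∈ A
      intro hf
      have hclopen : ∀ c : ℝ, IsClopen (f ⁻¹' {c}) :=
        fun c => ⟨isClosed_singleton.preimage f.continuous, fiber_isOpen f hf c⟩
      have hfeq : f = ∑ c ∈ hf.toFinset, c • clopenIndicator (f ⁻¹' {c}) (hclopen c) := by
        ext x
        rw [ContinuousMap.coe_sum, Finset.sum_apply]
        rw [Finset.sum_eq_single (f x)]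
        · simp [clopenIndicator, Set.indicator_of_mem (show x ∈ f ⁻¹' {f x} from rfl)]
        · intro c _ hne
          have : x ∉ f ⁻¹' {c} := fun h => hne h.symm
          simp [clopenIndicator, Set.indicator_of_notMem this]
        · intro h
          exact absurd (hf.mem_toFinset.mpr ⟨x, rfl⟩) h
      rw [hfeq]
      exact Finset.sum_induction _ (· ∈ A) (fun a b ha hb => hadd a ha b hb)
        (by simpa using hconst 0) (fun c _ => hsmul c _ (hind _ _))
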